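/- Let F be a subfield of ℂ and let a ∈ F. Then every complex root x of the ninth-degree equation (x³ + a)³ + a = x is solvable by radicals over F, i.e. x lies in the subfield solvableByRad F ℂ of elements of ℂ obtainable from F by field operations and extraction of n-th roots. -/

import Mathlib

lemma nat_mem_sbr {F : Subfield ℂ} (n : ℕ) : (n : ℂ) ∈ solvableByRad F ℂ := by
  induction n with
  | zero => simpa using zero_mem (solvableByRad F ℂ)
  | succ k ih => push_cast; exact add_mem ih (one_mem _)

lemma rad_mem {F : Subfield ℂ} {z : ℂ} (n : ℕ) (hn : n ≠ 0)
    (h : z ^ n ∈ solvableByRad F ℂ) : z ∈ solvableByRad F ℂ :=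
  solvableByRad.rad_mem hn h

lemma quad_mem {F : Subfield ℂ} {b c : ℂ} (hb : b ∈ solvableByRad F ℂ)
    (hc : c ∈ solvableByRad F ℂ) {t : ℂ} (ht : t ^ 2 + b * t + c = 0) :
    t ∈ solvableByRad F ℂ := by
  have h4 : (4 : ℂ) ∈ solvableByRad F ℂ := by exact_mod_cast nat_mem_sbr 4
  have h2 : (2 : ℂ) ∈ solvableByRad F ℂ := by exact_mod_cast nat_mem_sbr 2
  have hs : (2 * t + b) ^ 2 = b ^ 2 - 4 * c := by linear_combination 4 * ht
  have h1 : (2 * t + b) ∈ solvableByRad F ℂ := by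
    apply rad_mem 2 two_ne_zero
    rw [hs]
    exact sub_mem (pow_mem hb 2) (mul_mem h4 hc)
  have : t = (2 : ℂ)⁻¹ * ((2 * t + b) - b) := by ring
  rw [this]
  exact mul_mem (inv_mem h2) (sub_mem h1 hb)

lemma cubic_mem {F : Subfield ℂ} {p q : ℂ} (hp : p ∈ solvableByRad F ℂ)
    (hq : q ∈ solvableByRad F ℂ) {t : ℂ} (ht : t ^ 3 + p * t + q = 0) :
    t ∈ solvableByRad F ℂ := by
  have h3 : (3 : ℂ) ∈ solvableByRad F ℂ := by exact_mod_cast nat_mem_sbr 3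
  have h27 : (27 : ℂ) ∈ solvableByRad F ℂ := by exact_mod_cast nat_mem_sbr 27
  -- u is a root of z² - t z - p/3, built from a square root w of t² + 4p/3
  obtain ⟨u, hu⟩ : ∃ u : ℂ, u ^ 2 - t * u - p / 3 = 0 := by
    obtain ⟨w, hw⟩ : ∃ w : ℂ, w ^ 2 = t ^ 2 + 4 * p / 3 :=
      IsAlgClosed.exists_pow_nat_eq (t ^ 2 + 4 * p / 3) zero_lt_two
    exact ⟨(t + w) / 2, by field_simp; linear_combination 3 * hw⟩
  -- u³ satisfies w² + q w - p³/27 = 0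
  have hu3 : (u ^ 3) ^ 2 + q * (u ^ 3) - p ^ 3 / 27 = 0 := by
    linear_combination (u ^ 4 + u ^ 3 * t + u ^ 2 * p / 3 + u ^ 2 * t ^ 2 + u * q
        + 2 / 3 * u * t * p + u * t ^ 3 + p ^ 2 / 9 + t ^ 2 * p + t * q + t ^ 4) * hu
      + (u * t ^ 2 + t * p / 3 + u * p / 3) * ht
  have hu3mem : u ^ 3 ∈ solvableByRad F ℂ := by
    apply quad_mem hq (c := -(p ^ 3 / 27))
      (by
        apply neg_mem
        have : p ^ 3 / 27 = (27 : ℂ)⁻¹ * p ^ 3 := by ring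
        rw [this]; exact mul_mem (inv_mem h27) (pow_mem hp 3))
    linear_combination hu3
  have humem : u ∈ solvableByRad F ℂ := rad_mem 3 (by norm_num) hu3mem
  by_cases hu0 : u = 0
  · -- then p = 0 from hu, so t³ = -q
    have hp0 : p = 0 := by
      rw [hu0] at hu
      have h' : p / 3 = 0 := by linear_combination -hu
      field_simp at h'; simpa using h'
    have : t ^ 3 = -q := by rw [hp0] at ht; linear_combination ht
    exact rad_mem 3 (by norm_num) (this ▸ neg_mem hq)
  · -- v = t - u satisfies u*v = -p/3, so t = u - p/(3u)
    have : t = u - 3⁻¹ * p * u⁻¹ := by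
      field_simp
      linear_combination (-3 : ℂ) * hu
    rw [this]
    exact sub_mem humem (mul_mem (mul_mem (inv_mem h3) hp) (inv_mem humem))

theorem stmt_18 (F : Subfield ℂ) (a : ℂ) (ha : a ∈ F) (x : ℂ)
    (hx : (x ^ 3 + a) ^ 3 + a = x) :
    x ∈ solvableByRad F ℂ := by
  have haS : a ∈ solvableByRad F ℂ := (solvableByRad F ℂ).algebraMap_mem (⟨a, ha⟩ : F)
  have hfac : (x ^ 3 + a - x) * (x ^ 6 + x ^ 4 + 2 * a * x ^ 3 + x ^ 2 + a * x + a ^ 2 + 1)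
      = 0 := by linear_combination hx
  rcases mul_eq_zero.mp hfac with h | hQ
  · -- cubic case: x³ - x + a = 0
    have h' : x ^ 3 + (-1) * x + a = 0 := by linear_combination h
    exact cubic_mem (neg_mem (one_mem _)) haS h'
  · -- sextic case
    set s := x ^ 3 + x + a with hs_def
    have hs : s ^ 3 + 2 * s + (-a) = 0 := by
      rw [hs_def]
      linear_combination (-(1 : ℂ) / 2) * hx + (3 / 2) * (x ^ 3 + x + a) * hQ
    have hsS : s ∈ solvableByRad F ℂ :=
      cubic_mem (by exact_mod_cast nat_mem_sbr 2) (neg_mem haS) hs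
    have hquad : x ^ 2 + (-s) * x + (s ^ 2 + 1) = 0 := by
      rw [hs_def]; linear_combination hQ
    exact quad_mem (neg_mem hsS) (add_mem (pow_mem hsS 2) (one_mem _)) hquad
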